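/- arXiv:2311.12937 — 2 statements merged into one kernel-verified Lean document; each statement's English description precedes it below -/
import Mathlib

section
/- If α ∈ (1/2, 1), then for every n ≥ 2 the inequalities g_n(α) > g_{n+1}(α) > (n/(n + 2 - 2α)) g_n(α) hold. -/
open Set

/-- The coefficient sequence `g_n(α)` defined by the recurrence
`g_0 = 0`, `g_1 = 1`, `g_{n+2} = (2α g_{n+1} + n g_n)/(n+2)`. -/
noncomputable def g (α : ℝ) : ℕ → ℝ
  | 0 => 0
  | 1 => 1
  | (n + 2) => (2 * α * g α (n + 1) + n * g α n) / (n + 2)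

lemma g_rec (α : ℝ) (n : ℕ) :
    g α (n + 2) * ((n : ℝ) + 2) = 2 * α * g α (n + 1) + n * g α n := by
  have h : ((n : ℝ) + 2) ≠ 0 := by positivity
  rw [g]
  field_simp

lemma key (α : ℝ) (hα : α ∈ Set.Ioo (1/2 : ℝ) 1) :
    ∀ n, 2 ≤ n → 0 < g α n ∧ g α (n + 1) < g α n ∧
      (n : ℝ) * g α n < ((n : ℝ) + 2 - 2 * α) * g α (n + 1) := by
  obtain ⟨ha1, ha2⟩ := hα
  intro n hn
  induction n, hn using Nat.le_induction with
  | base =>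
    have h2 : g α 2 = α := by
      show g α (0 + 2) = α
      rw [g]
      norm_num [g]
    have h3 : g α 3 * 3 = 2 * α * α + 1 := by
      show g α (1 + 2) * 3 = _
      rw [g]
      norm_num [g, show (1:ℕ)+1 = 2 from rfl, h2]
    have hf : (0:ℝ) < (1 - α) * (α^2 - α + 1) := by
      apply mul_pos (by linarith)
      nlinarith [sq_nonneg (2*α - 1)]
    norm_num [h2]
    refine ⟨by linarith, by nlinarith, by nlinarith⟩
  | succ n hn ih =>
    obtain ⟨h0, h1, h2⟩ := ih
    have hnR : (2 : ℝ) ≤ (n : ℝ) := by exact_mod_cast hn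
    have hc : (0 : ℝ) < (n : ℝ) + 2 - 2 * α := by linarith
    have hpos1 : 0 < g α (n + 1) := by nlinarith
    have hq := g_rec α n
    have hqpos : (0 : ℝ) < (n : ℝ) + 2 := by linarith
    have hstep1 : g α (n + 2) < g α (n + 1) := by nlinarith
    have hstep2 : ((n : ℝ) + 1) * g α (n + 1) < ((n : ℝ) + 1 + 2 - 2 * α) * g α (n + 2) := by
      nlinarith [mul_pos hc hpos1, sq_nonneg (α - 1), sq_nonneg (2 * α - 1),
        mul_pos (mul_pos hc hpos1) (sub_pos.mpr h1)]
    refine ⟨hpos1, ?_, ?_⟩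
    · exact_mod_cast hstep1
    · push_cast
      convert hstep2 using 2

theorem stmt6 (α : ℝ) (hα : α ∈ Set.Ioo (1/2 : ℝ) 1) (n : ℕ) (hn : 2 ≤ n) :
    g α n > g α (n + 1) ∧ g α (n + 1) > (n / (n + 2 - 2 * α)) * g α n := by
  obtain ⟨h0, h1, h2⟩ := key α hα n hn
  refine ⟨h1, ?_⟩
  have hnR : (2 : ℝ) ≤ (n : ℝ) := by exact_mod_cast hn
  have hc : (0 : ℝ) < (n : ℝ) + 2 - 2 * α := by
    obtain ⟨ha1, ha2⟩ := hα
    linarith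
  rw [gt_iff_lt, div_mul_eq_mul_div, div_lt_iff₀ hc]
  nlinarith
end

section
/- For all α, β ∈ (0,1] with α + β < 1, the Hadamard product f_α * f_β (the holomorphic function on the unit disk whose n-th Taylor coefficient is g_n(α)·g_n(β)) is bounded on the unit disk. -/
open Set Filter

/-- The Hadamard product f_α * f_β, with Taylor coefficients g_n(α)·g_n(β). -/
noncomputable def hadamard (α β : ℝ) (z : ℂ) : ℂ :=
  ∑' n : ℕ, ((g α n * g β n : ℝ) : ℂ) * z ^ n

lemma midpoint_rpow {p u v a : ℝ} (hp : p ≤ 0) (hu : 0 < u) (hv : 0 < v)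
    (ha : 0 < a) (hsum : u + v = 2 * a) : 2 * a ^ p ≤ u ^ p + v ^ p := by
  set x := u ^ (p/2) with hx
  set y := v ^ (p/2) with hy
  have hx0 : 0 ≤ x := Real.rpow_nonneg hu.le _
  have hy0 : 0 ≤ y := Real.rpow_nonneg hv.le _
  have hxx : x * x = u ^ p := by rw [hx, ← Real.rpow_add hu]; ring_nf
  have hyy : y * y = v ^ p := by rw [hy, ← Real.rpow_add hv]; ring_nf
  have hxy : x * y = (u * v) ^ (p/2) := (Real.mul_rpow hu.le hv.le).symm
  have huv : u * v ≤ a ^ 2 := by nlinarith [sq_nonneg (u - v)]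
  have h1 : a ^ p ≤ (u * v) ^ (p/2) := by
    have h2 := Real.antitoneOn_rpow_Ioi_of_exponent_nonpos (by linarith : p/2 ≤ 0)
      (Set.mem_Ioi.2 (mul_pos hu hv)) (Set.mem_Ioi.2 (pow_pos ha 2)) huv
    calc a ^ p = (a ^ 2) ^ (p/2) := by
          rw [← Real.rpow_natCast a 2, ← Real.rpow_mul ha.le]; norm_num; ring_nf
      _ ≤ (u * v) ^ (p/2) := h2
  nlinarith [sq_nonneg (x - y)]

lemma key_ineq {α a : ℝ} (hα : 0 < α) (hα1 : α ≤ 1) (ha : 2 ≤ a) :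
    2 * α * a ^ (α - 1) ≤ (a + 1) ^ α - (a - 1) ^ α := by
  have ha0 : 0 < a := by linarith
  set F : ℝ → ℝ := fun t => (a + t) ^ α - (a - t) ^ α - 2 * α * a ^ (α - 1) * t with hF
  have hderiv : ∀ t ∈ Set.Ioo (0:ℝ) 1, HasDerivAt F
      (α * (a + t) ^ (α - 1) + α * (a - t) ^ (α - 1) - 2 * α * a ^ (α - 1)) t := by
    intro t ht
    have h1 : HasDerivAt (fun t : ℝ => a + t) 1 t := by
      simpa using (hasDerivAt_id t).const_add a
    have h2 : HasDerivAt (fun t : ℝ => a - t) (-1) t := by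
      simpa using (hasDerivAt_id t).const_sub a
    have hp1 : HasDerivAt (fun t : ℝ => (a + t) ^ α) (1 * α * (a + t) ^ (α - 1)) t :=
      h1.rpow_const (Or.inl (by nlinarith [ht.1]))
    have hp2 : HasDerivAt (fun t : ℝ => (a - t) ^ α) ((-1) * α * (a - t) ^ (α - 1)) t :=
      h2.rpow_const (Or.inl (by nlinarith [ht.2]))
    have h3 : HasDerivAt (fun t : ℝ => 2 * α * a ^ (α - 1) * t) (2 * α * a ^ (α - 1)) t := by
      simpa using (hasDerivAt_id t).const_mul (2 * α * a ^ (α - 1))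
    have := (hp1.sub hp2).sub h3
    exact this.congr_deriv (by ring)
  have hc : Continuous fun x : ℝ => x ^ α :=
    continuous_iff_continuousAt.2 fun x => Real.continuousAt_rpow_const x α (Or.inr hα.le)
  have hcont : ContinuousOn F (Set.Icc 0 1) :=
    (((hc.comp (continuous_const.add continuous_id)).sub
      (hc.comp (continuous_const.sub continuous_id))).sub
      (continuous_const.mul continuous_id)).continuousOn
  have hmono : MonotoneOn F (Set.Icc 0 1) := by
    apply monotoneOn_of_deriv_nonneg (convex_Icc 0 1) hcont
    · intro t ht
      rw [interior_Icc] at ht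
      exact (hderiv t ht).differentiableAt.differentiableWithinAt
    · intro t ht
      rw [interior_Icc] at ht
      rw [(hderiv t ht).deriv]
      have hmid : 2 * a ^ (α - 1) ≤ (a + t) ^ (α - 1) + (a - t) ^ (α - 1) :=
        midpoint_rpow (by linarith) (by linarith [ht.1]) (by linarith [ht.2]) ha0 (by ring)
      nlinarith
  have h01 : F 0 ≤ F 1 := hmono (Set.mem_Icc.2 ⟨le_refl 0, zero_le_one⟩)
    (Set.mem_Icc.2 ⟨zero_le_one, le_refl 1⟩) zero_le_one
  have hF0 : F 0 = 0 := by simp [hF]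
  have hF1 : F 1 = (a + 1) ^ α - (a - 1) ^ α - 2 * α * a ^ (α - 1) := by simp [hF]
  rw [hF0, hF1] at h01
  linarith

lemma g_nonneg {α : ℝ} (hα : 0 < α) : ∀ n, 0 ≤ g α n := by
  have key : ∀ n, 0 ≤ g α n ∧ 0 ≤ g α (n + 1) := by
    intro n
    induction n with
    | zero => constructor <;> simp [g]
    | succ k ih =>
      refine ⟨ih.2, ?_⟩
      rw [g]
      apply div_nonneg
      · have := ih.1; have := ih.2; positivity
      · positivity
  exact fun n => (key n).1

lemma α_le_two_rpow {α : ℝ} (hα : 0 < α) (hα1 : α ≤ 1) : α ≤ (2:ℝ) ^ (α - 1) := by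
  rw [Real.rpow_def_of_pos (by norm_num : (0:ℝ) < 2)]
  have h1 := Real.add_one_le_exp (Real.log 2 * (α - 1))
  have h2 : Real.log 2 < 0.6931471808 := Real.log_two_lt_d9
  have h3 : 0 < Real.log 2 := Real.log_pos (by norm_num)
  nlinarith

lemma g_le {α : ℝ} (hα : 0 < α) (hα1 : α ≤ 1) :
    ∀ n : ℕ, g α (n + 1) ≤ ((n + 1 : ℕ) : ℝ) ^ (α - 1) := by
  have key : ∀ n : ℕ, g α (n + 1) ≤ ((n + 1 : ℕ) : ℝ) ^ (α - 1) ∧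
      g α (n + 2) ≤ ((n + 2 : ℕ) : ℝ) ^ (α - 1) := by
    intro n
    induction n with
    | zero =>
      constructor
      · simp [g]
      · have hg2 : g α 2 = α := by simp [g]
        rw [hg2]
        have h2r := α_le_two_rpow hα hα1
        norm_num
        try exact h2r
        try { convert h2r using 2; norm_num }
    | succ k ih =>
      refine ⟨ih.2, ?_⟩
      have hk1 : (0:ℝ) < (k:ℝ) + 1 := by positivity
      have hk2 : (0:ℝ) < (k:ℝ) + 2 := by positivity
      have hk3 : (0:ℝ) < (k:ℝ) + 3 := by positivity
      have hrec : g α (k + 3) = (2 * α * g α (k + 2) + ((k:ℝ) + 1) * g α (k + 1)) / ((k:ℝ) + 3) := by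
        show g α ((k + 1) + 2) = _
        rw [g]
        push_cast
        ring_nf
      rw [hrec]
      rw [div_le_iff₀ hk3]
      have hcast1 : ((k + 1 : ℕ) : ℝ) = (k:ℝ) + 1 := by push_cast; ring
      have hcast2 : ((k + 2 : ℕ) : ℝ) = (k:ℝ) + 2 := by push_cast; ring
      have hcast3 : ((k + 1 + 2 : ℕ) : ℝ) = (k:ℝ) + 3 := by push_cast; ring
      rw [hcast3]
      have h1 : g α (k + 2) ≤ ((k:ℝ) + 2) ^ (α - 1) := by rw [← hcast2]; exact ih.2
      have h2 : g α (k + 1) ≤ ((k:ℝ) + 1) ^ (α - 1) := by rw [← hcast1]; exact ih.1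
      have hkey := key_ineq hα hα1 (by linarith : (2:ℝ) ≤ (k:ℝ) + 2)
      -- (k+1) * (k+1)^(α-1) = (k+1)^α
      have e1 : ((k:ℝ) + 1) * ((k:ℝ) + 1) ^ (α - 1) = ((k:ℝ) + 1) ^ α := by
        nth_rewrite 1 [← Real.rpow_one ((k:ℝ)+1)]
        rw [← Real.rpow_add hk1]
        ring_nf
      have e2 : ((k:ℝ) + 3) ^ (α - 1) * ((k:ℝ) + 3) = ((k:ℝ) + 3) ^ α := by
        nth_rewrite 2 [← Real.rpow_one ((k:ℝ)+3)]
        rw [← Real.rpow_add hk3]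
        ring_nf
      rw [e2]
      have : ((k:ℝ) + 2) + 1 = (k:ℝ) + 3 := by ring
      rw [this] at hkey
      have : ((k:ℝ) + 2) - 1 = (k:ℝ) + 1 := by ring
      rw [this] at hkey
      have hg1 : 0 ≤ g α (k+1) := g_nonneg hα _
      have hg2 : 0 ≤ g α (k+2) := g_nonneg hα _
      have hmul : ((k:ℝ) + 1) * g α (k + 1) ≤ ((k:ℝ) + 1) ^ α := by
        calc ((k:ℝ) + 1) * g α (k + 1) ≤ ((k:ℝ) + 1) * ((k:ℝ) + 1) ^ (α - 1) := by
              apply mul_le_mul_of_nonneg_left h2 hk1.le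
          _ = ((k:ℝ) + 1) ^ α := e1
      nlinarith [Real.rpow_nonneg hk1.le α, Real.rpow_nonneg hk2.le (α-1)]
  exact fun n => (key n).1

theorem stmt10 (α β : ℝ) (hα : α ∈ Set.Ioc (0:ℝ) 1) (hβ : β ∈ Set.Ioc (0:ℝ) 1)
    (hαβ : α + β < 1) :
    ∃ M : ℝ, ∀ z ∈ Metric.ball (0:ℂ) 1, ‖hadamard α β z‖ ≤ M := by
  obtain ⟨hα0, hα1⟩ := hα
  obtain ⟨hβ0, hβ1⟩ := hβ
  have hsum : Summable (fun n : ℕ => (n : ℝ) ^ (α + β - 2)) :=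
    Real.summable_nat_rpow.2 (by linarith)
  refine ⟨∑' n : ℕ, (n : ℝ) ^ (α + β - 2), ?_⟩
  intro z hz
  rw [Metric.mem_ball, dist_zero_right] at hz
  -- termwise bound
  have hbound : ∀ n : ℕ, ‖((g α n * g β n : ℝ) : ℂ) * z ^ n‖ ≤ (n : ℝ) ^ (α + β - 2) := by
    intro n
    match n with
    | 0 =>
      simp only [g]
      simp
      exact Real.rpow_nonneg le_rfl _
    | (m + 1) =>
      have hn1 : (0:ℝ) < ((m + 1 : ℕ) : ℝ) := by positivity
      rw [norm_mul, norm_pow, Complex.norm_real]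
      have hzn : ‖z‖ ^ (m + 1) ≤ 1 := pow_le_one₀ (norm_nonneg z) hz.le
      have hga := g_le hα0 hα1 m
      have hgb := g_le hβ0 hβ1 m
      have h1 : |g α (m+1) * g β (m+1)| = g α (m+1) * g β (m+1) :=
        abs_of_nonneg (mul_nonneg (g_nonneg hα0 _) (g_nonneg hβ0 _))
      calc |g α (m+1) * g β (m+1)| * ‖z‖ ^ (m+1)
          ≤ |g α (m+1) * g β (m+1)| * 1 := by
            apply mul_le_mul_of_nonneg_left hzn (abs_nonneg _)
        _ = g α (m+1) * g β (m+1) := by rw [mul_one, h1]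
        _ ≤ ((m+1:ℕ):ℝ) ^ (α - 1) * ((m+1:ℕ):ℝ) ^ (β - 1) := by
            apply mul_le_mul hga hgb (g_nonneg hβ0 _) (Real.rpow_nonneg hn1.le _)
        _ = ((m+1:ℕ):ℝ) ^ (α + β - 2) := by
            rw [← Real.rpow_add hn1]; ring_nf
  have hsnorm : Summable (fun n : ℕ => ‖((g α n * g β n : ℝ) : ℂ) * z ^ n‖) :=
    Summable.of_nonneg_of_le (fun n => norm_nonneg _) hbound hsum
  calc ‖hadamard α β z‖ ≤ ∑' n : ℕ, ‖((g α n * g β n : ℝ) : ℂ) * z ^ n‖ :=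
        norm_tsum_le_tsum_norm hsnorm
    _ ≤ ∑' n : ℕ, (n : ℝ) ^ (α + β - 2) := Summable.tsum_le_tsum hbound hsnorm hsum
end
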